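/- Let f(x) = ∑_{n≥1} b_n x^n be a power series over a field of characteristic p > 0 converging in a neighborhood of 0 in a complete nonarchimedean field, and for a in the domain let f_a(x) = f(x+a) − f(a) = ∑_{n≥1} b_{n,a} x^n. Let l = min{e ∈ ℕ : ∃ n > 1 with p ∤ n and b_{n p^e} ≠ 0}, assumed to exist. Then for all k < l and all m ≥ 1 with p ∤ m, the coefficient b_{m p^k, a} is independent of a; and the coefficient b_{p^l, a} takes infinitely many values as a varies in any open neighborhood of 0 within the domain of convergence. -/

import Mathlib

private lemma dvd_iff_of_modEq {p a c : ℕ} (h : a ≡ c [MOD p]) : p ∣ a ↔ p ∣ c := by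
  rw [← Nat.modEq_zero_iff_dvd, ← Nat.modEq_zero_iff_dvd]
  exact ⟨h.symm.trans, h.trans⟩

/-- If `p ∤ C(n, m p^k)` with `p ∤ m`, then `p^(k+1) ∤ n`. -/
private lemma lucas_aux1 {p : ℕ} [hp : Fact p.Prime] :
    ∀ (k : ℕ), ∀ m n : ℕ, ¬ p ∣ m → ¬ p ∣ Nat.choose n (m * p ^ k) → ¬ p ^ (k + 1) ∣ n := by
  have hp1 : 1 < p := hp.out.one_lt
  intro k
  induction k with
  | zero =>
    intro m n hm hch hdvd
    rw [pow_one] at hdvd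
    apply hch
    have h := Choose.choose_modEq_choose_mod_mul_choose_div_nat (p := p) (n := n) (k := m * p ^ 0)
    simp only [pow_zero, mul_one] at h
    have hn0 : n % p = 0 := Nat.mod_eq_zero_of_dvd hdvd
    have hm0 : m % p ≠ 0 := fun h0 => hm (Nat.dvd_iff_mod_eq_zero.mpr h0)
    rw [hn0] at h
    have hz : Nat.choose 0 (m % p) = 0 := Nat.choose_eq_zero_of_lt (by omega)
    rw [hz, zero_mul] at h
    rw [pow_zero, mul_one]
    exact (dvd_iff_of_modEq h).mpr (dvd_zero p)
  | succ k ih =>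
    intro m n hm hch hdvd
    have h := Choose.choose_modEq_choose_mod_mul_choose_div_nat (p := p) (n := n)
      (k := m * p ^ (k + 1))
    have h1 : (m * p ^ (k + 1)) % p = 0 := by
      apply Nat.mod_eq_zero_of_dvd
      exact Dvd.dvd.mul_left (dvd_pow_self p (Nat.succ_ne_zero k)) m
    have h2 : (m * p ^ (k + 1)) / p = m * p ^ k := by
      rw [pow_succ, ← mul_assoc]
      exact Nat.mul_div_cancel _ (by omega)
    rw [h1, h2, Nat.choose_zero_right, one_mul] at h
    have hch' : ¬ p ∣ Nat.choose (n / p) (m * p ^ k) :=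
      fun hd => hch ((dvd_iff_of_modEq h).mpr hd)
    have := ih m (n / p) hm hch'
    apply this
    obtain ⟨t, ht⟩ := hdvd
    refine ⟨t, ?_⟩
    rw [ht, pow_succ, mul_comm (p ^ (k+1)) p, mul_assoc]
    exact Nat.mul_div_cancel_left _ (by omega)

/-- `p ∤ n` implies `p ∤ C(n p^l, p^l)`. -/
private lemma lucas_aux2 {p : ℕ} [hp : Fact p.Prime] :
    ∀ (l : ℕ), ∀ n : ℕ, ¬ p ∣ n → ¬ p ∣ Nat.choose (n * p ^ l) (p ^ l) := by
  have hp1 : 1 < p := hp.out.one_lt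
  intro l
  induction l with
  | zero => intro n hn; simpa using hn
  | succ l ih =>
    intro n hn
    have h := Choose.choose_modEq_choose_mod_mul_choose_div_nat (p := p)
      (n := n * p ^ (l + 1)) (k := p ^ (l + 1))
    have h1 : (n * p ^ (l + 1)) % p = 0 := by
      apply Nat.mod_eq_zero_of_dvd
      exact Dvd.dvd.mul_left (dvd_pow_self p (Nat.succ_ne_zero l)) n
    have h1' : (p ^ (l + 1)) % p = 0 := by
      apply Nat.mod_eq_zero_of_dvd
      exact dvd_pow_self p (Nat.succ_ne_zero l)
    have h2 : (n * p ^ (l + 1)) / p = n * p ^ l := by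
      rw [pow_succ, ← mul_assoc]
      exact Nat.mul_div_cancel _ (by omega)
    have h2' : (p ^ (l + 1)) / p = p ^ l := by
      rw [pow_succ]
      exact Nat.mul_div_cancel _ (by omega)
    rw [h1, h1', h2, h2', Nat.choose_self, one_mul] at h
    exact fun hd => ih n hn ((dvd_iff_of_modEq h).mp hd)

/- STATEMENT 19: Let f(x) = ∑_{n≥1} b_n x^n be a power series over a complete nonarchimedean
field of characteristic p > 0, converging on ‖x‖ < r; for a in the domain the recentered
coefficients are b_{n,a} = ∑_{k≥0} binom(n+k,n) b_{n+k} a^k (formula from the context).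
Let l = min{e : ∃ n > 1, p ∤ n and b_{n p^e} ≠ 0}, assumed to exist.  Then:
(1) for all k < l and all m ≥ 1 with p ∤ m, the coefficient b_{m p^k, a} is independent of a;
(2) the coefficient b_{p^l, a} takes infinitely many values as a varies in any open
neighborhood of 0 within the domain of convergence. -/
theorem stmt19 {K : Type*} [NontriviallyNormedField K] [IsUltrametricDist K] [CompleteSpace K]
    (p : ℕ) [Fact p.Prime] [CharP K p]
    (b : ℕ → K) (hb0 : b 0 = 0) (r : ℝ) (hr : 0 < r)
    (hconv : ∀ x : K, ‖x‖ < r → ∃ S : K, HasSum (fun n => b n * x ^ n) S)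
    (l : ℕ)
    (hlmem : ∃ n : ℕ, 1 < n ∧ ¬ p ∣ n ∧ b (n * p ^ l) ≠ 0)
    (hlmin : ∀ e < l, ∀ n : ℕ, 1 < n → ¬ p ∣ n → b (n * p ^ e) = 0) :
    (∀ k < l, ∀ m : ℕ, 1 ≤ m → ¬ p ∣ m → ∀ a a' : K, ‖a‖ < r → ‖a'‖ < r →
      (∑' j : ℕ, ((m * p ^ k + j).choose (m * p ^ k) : K) * b (m * p ^ k + j) * a ^ j) =
        (∑' j : ℕ, ((m * p ^ k + j).choose (m * p ^ k) : K) * b (m * p ^ k + j) * a' ^ j)) ∧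
    (∀ W : Set K, IsOpen W → (0 : K) ∈ W →
      {t : K | ∃ a : K, a ∈ W ∧ ‖a‖ < r ∧
        t = ∑' j : ℕ, ((p ^ l + j).choose (p ^ l) : K) * b (p ^ l + j) * a ^ j}.Infinite) := by
  have hp := (Fact.out : p.Prime)
  have hp1 : 1 < p := hp.one_lt
  constructor
  · -- Part 1
    intro k hk m hm hmp a a' _ _
    have hzero : ∀ j : ℕ, j ≠ 0 →
        ((m * p ^ k + j).choose (m * p ^ k) : K) * b (m * p ^ k + j) = 0 := by
      intro j hj
      set n := m * p ^ k + j with hn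
      by_cases hch : p ∣ n.choose (m * p ^ k)
      · rw [(CharP.cast_eq_zero_iff K p _).mpr hch, zero_mul]
      · have hnd : ¬ p ^ (k + 1) ∣ n := lucas_aux1 k m n hmp hch
        have hn0 : n ≠ 0 := by
          have : 0 < p ^ k := pow_pos (by omega) k
          omega
        set e := n.factorization p with he_def
        have he : e ≤ k := by
          by_contra hcon
          exact hnd ((Nat.Prime.pow_dvd_iff_le_factorization hp hn0).mpr (by omega))
        have hq : ¬ p ∣ n / p ^ e := Nat.not_dvd_ordCompl hp hn0
        have hself : p ^ e * (n / p ^ e) = n := Nat.ordProj_mul_ordCompl_eq_self n p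
        have hpe_lt : p ^ e < n := by
          have h1 : p ^ e ≤ p ^ k := Nat.pow_le_pow_right (by omega) he
          have h2 : p ^ k ≤ m * p ^ k := Nat.le_mul_of_pos_left _ (by omega)
          omega
        have hdvd : p ^ e ∣ n := Nat.ordProj_dvd n p
        have h1 : 1 < n / p ^ e := by
          rw [Nat.lt_div_iff_mul_lt' hdvd, mul_one]
          exact hpe_lt
        have hb := hlmin e (lt_of_le_of_lt he hk) (n / p ^ e) h1 hq
        rw [mul_comm] at hself
        rw [show n = (n / p ^ e) * p ^ e from hself.symm] at hn ⊢
        rw [hb, mul_zero]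
    rw [tsum_eq_single 0 (fun j hj => by rw [hzero j hj, zero_mul]),
        tsum_eq_single 0 (fun j hj => by rw [hzero j hj, zero_mul])]
    simp
  · -- Part 2
    classical
    set c : ℕ → K := fun j => ((p ^ l + j).choose (p ^ l) : K) * b (p ^ l + j) with hc_def
    obtain ⟨n, hn1, hnp, hbn⟩ := hlmem
    -- existence of a nonzero higher coefficient
    have hexists : ∃ j : ℕ, 0 < j ∧ c j ≠ 0 := by
      refine ⟨(n - 1) * p ^ l, Nat.mul_pos (by omega) (pow_pos (by omega) l), ?_⟩
      have hEq : p ^ l + (n - 1) * p ^ l = n * p ^ l := by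
        have hnn : n - 1 + 1 = n := by omega
        calc p ^ l + (n - 1) * p ^ l = (n - 1 + 1) * p ^ l := by ring
          _ = n * p ^ l := by rw [hnn]
      simp only [hc_def, hEq]
      apply mul_ne_zero _ hbn
      intro h0
      exact lucas_aux2 l n hnp ((CharP.cast_eq_zero_iff K p _).mp h0)
    set j0 := Nat.find hexists with hj0_def
    obtain ⟨hj0pos, hcj0⟩ := Nat.find_spec hexists
    have hj0min : ∀ j, 0 < j → j < j0 → c j = 0 := by
      intro j hj hjlt
      have := Nat.find_min hexists hjlt
      push_neg at this
      exact this hj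
    -- a base point for coefficient bounds
    obtain ⟨x0, hx0pos, hx0r⟩ := NormedField.exists_norm_lt K hr
    set ρ := ‖x0‖ with hρ_def
    obtain ⟨S, hS⟩ := hconv x0 hx0r
    have hsum0 : Summable fun n => b n * x0 ^ n := hS.summable
    have hbdd : BddAbove (Set.range fun n => ‖b n * x0 ^ n‖) :=
      (hsum0.tendsto_atTop_zero.norm.bddAbove_range)
    obtain ⟨M0, hM0⟩ := hbdd
    set M : ℝ := max M0 1 with hM_def
    have hMpos : 0 < M := by positivity
    have hMb : ∀ i : ℕ, ‖b i‖ * ρ ^ i ≤ M := by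
      intro i
      have := hM0 (Set.mem_range_self (f := fun n => ‖b n * x0 ^ n‖) i)
      rw [norm_mul, norm_pow] at this
      exact this.trans (le_max_left _ _)
    set M' : ℝ := M / ρ ^ (p ^ l) with hM'_def
    have hM'pos : 0 < M' := by positivity
    -- term bound
    have hterm : ∀ (a : K) (j : ℕ), ‖c j * a ^ j‖ ≤ M' * (‖a‖ / ρ) ^ j := by
      intro a j
      have hcb : ‖c j‖ ≤ M / ρ ^ (p ^ l + j) := by
        have h1 : ‖c j‖ ≤ ‖b (p ^ l + j)‖ := by
          rw [hc_def]
          calc ‖((p ^ l + j).choose (p ^ l) : K) * b (p ^ l + j)‖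
              = ‖((p ^ l + j).choose (p ^ l) : K)‖ * ‖b (p ^ l + j)‖ := norm_mul _ _
            _ ≤ 1 * ‖b (p ^ l + j)‖ := by
                gcongr; exact IsUltrametricDist.norm_natCast_le_one K _
            _ = ‖b (p ^ l + j)‖ := one_mul _
        have h2 : ‖b (p ^ l + j)‖ ≤ M / ρ ^ (p ^ l + j) := by
          rw [le_div_iff₀ (by positivity)]
          exact hMb _
        exact h1.trans h2
      calc ‖c j * a ^ j‖ = ‖c j‖ * ‖a‖ ^ j := by rw [norm_mul, norm_pow]
        _ ≤ (M / ρ ^ (p ^ l + j)) * ‖a‖ ^ j := by gcongr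
        _ = M' * (‖a‖ / ρ) ^ j := by
            rw [hM'_def, div_pow, pow_add]
            field_simp
            try ring
    -- the radius
    set s : ℝ := min (min r ρ) (‖c j0‖ * ρ ^ (j0 + 1) / M') with hs_def
    have hcj0pos : 0 < ‖c j0‖ := norm_pos_iff.mpr hcj0
    have hspos : 0 < s := by
      apply lt_min (lt_min hr hx0pos)
      positivity
    -- summability for small a
    have hsummable : ∀ a : K, ‖a‖ < ρ → Summable fun j => c j * a ^ j := by
      intro a ha
      apply Summable.of_norm_bounded ((summable_geometric_of_lt_one
        (by positivity) (by rw [div_lt_one hx0pos]; exact ha)).mul_left M') (hterm a)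
    -- the key norm formula
    have hkey : ∀ a : K, 0 < ‖a‖ → ‖a‖ < s →
        ‖(∑' j, c j * a ^ j) - c 0‖ = ‖c j0‖ * ‖a‖ ^ j0 := by
      intro a hapos has
      have haρ : ‖a‖ < ρ := lt_of_lt_of_le has ((min_le_left _ _).trans (min_le_right _ _))
      have haM : ‖a‖ < ‖c j0‖ * ρ ^ (j0 + 1) / M' := lt_of_lt_of_le has (min_le_right _ _)
      have hsum_a := hsummable a haρ
      have hsplit := Summable.sum_add_tsum_nat_add (f := fun j => c j * a ^ j) (j0 + 1) hsum_a
      set T : K := ∑' i, c (i + (j0 + 1)) * a ^ (i + (j0 + 1)) with hT_def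
      have hfin : ∑ j ∈ Finset.range (j0 + 1), c j * a ^ j = c 0 + c j0 * a ^ j0 := by
        rw [← Finset.sum_subset (s₁ := ({0, j0} : Finset ℕ))]
        · rw [Finset.sum_pair (by omega : (0 : ℕ) ≠ j0)]
          simp
        · intro x hx
          simp only [Finset.mem_insert, Finset.mem_singleton] at hx
          rcases hx with rfl | rfl <;> simp [Finset.mem_range] <;> omega
        · intro x hx hxn
          simp only [Finset.mem_insert, Finset.mem_singleton, not_or] at hxn
          simp only [Finset.mem_range] at hx
          rw [hj0min x (by omega) (by omega), zero_mul]
      have hTle : ‖T‖ ≤ M' * (‖a‖ / ρ) ^ (j0 + 1) := by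
        apply IsUltrametricDist.norm_tsum_le_of_forall_le_of_nonneg (by positivity)
        intro i
        calc ‖c (i + (j0 + 1)) * a ^ (i + (j0 + 1))‖
            ≤ M' * (‖a‖ / ρ) ^ (i + (j0 + 1)) := hterm a _
          _ ≤ M' * (‖a‖ / ρ) ^ (j0 + 1) := by
              apply mul_le_mul_of_nonneg_left _ hM'pos.le
              exact pow_le_pow_of_le_one (by positivity) (by
                rw [div_le_one hx0pos]; exact haρ.le) (by omega)
      have hmain_pos : (0 : ℝ) < ‖c j0 * a ^ j0‖ := by
        rw [norm_mul, norm_pow]; positivity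
      have hTlt : ‖T‖ < ‖c j0 * a ^ j0‖ := by
        apply lt_of_le_of_lt hTle
        rw [norm_mul, norm_pow]
        have hfac : 0 < ‖a‖ ^ j0 / ρ ^ (j0 + 1) := by positivity
        have hstep : (M' * ‖a‖) * (‖a‖ ^ j0 / ρ ^ (j0 + 1)) <
            (‖c j0‖ * ρ ^ (j0 + 1)) * (‖a‖ ^ j0 / ρ ^ (j0 + 1)) := by
          apply mul_lt_mul_of_pos_right _ hfac
          rw [lt_div_iff₀ hM'pos] at haM
          linarith [haM]
        calc M' * (‖a‖ / ρ) ^ (j0 + 1)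
            = (M' * ‖a‖) * (‖a‖ ^ j0 / ρ ^ (j0 + 1)) := by
              rw [div_pow, pow_succ]
              field_simp
              try ring
          _ < (‖c j0‖ * ρ ^ (j0 + 1)) * (‖a‖ ^ j0 / ρ ^ (j0 + 1)) := hstep
          _ = ‖c j0‖ * ‖a‖ ^ j0 := by field_simp; try ring
      have heq : (∑' j, c j * a ^ j) - c 0 = c j0 * a ^ j0 + T := by
        rw [← hsplit, hfin]; ring
      rw [heq, IsUltrametricDist.norm_add_eq_max_of_norm_ne_norm (by
        intro h; rw [h] at hTlt; exact lt_irrefl _ hTlt)]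
      rw [max_eq_left hTlt.le, norm_mul, norm_pow]
    -- now build infinitely many values
    intro W hW hW0
    obtain ⟨ε, hε, hball⟩ := Metric.isOpen_iff.mp hW 0 hW0
    set δ : ℝ := min ε s with hδ_def
    have hδpos : 0 < δ := lt_min hε hspos
    obtain ⟨y, hy0, hyδ⟩ := NormedField.exists_norm_lt K hδpos
    obtain ⟨z, hz⟩ := NormedField.exists_one_lt_norm K
    have hz0 : z ≠ 0 := by
      intro h; rw [h, norm_zero] at hz; linarith
    set q : ℝ := ‖z‖⁻¹ with hq_def
    have hq0 : 0 < q := by positivity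
    have hq1 : q < 1 := by
      rw [hq_def, inv_lt_one_iff₀]; right; exact hz
    set a : ℕ → K := fun i => y * (z⁻¹) ^ i with ha_def
    have hanorm : ∀ i, ‖a i‖ = ‖y‖ * q ^ i := by
      intro i
      rw [ha_def]
      simp [norm_mul, norm_pow, norm_inv, hq_def]
    have hapos : ∀ i, 0 < ‖a i‖ := by
      intro i; rw [hanorm]; positivity
    have hasmall : ∀ i, ‖a i‖ < δ := by
      intro i
      rw [hanorm]
      calc ‖y‖ * q ^ i ≤ ‖y‖ * 1 := by
            apply mul_le_mul_of_nonneg_left _ (norm_nonneg y)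
            exact pow_le_one₀ hq0.le hq1.le
        _ = ‖y‖ := mul_one _
        _ < δ := hyδ
    have haanti : StrictAnti fun i : ℕ => ‖a i‖ := by
      intro i j hij
      simp only [hanorm]
      exact mul_lt_mul_of_pos_left (pow_lt_pow_right_of_lt_one₀ hq0 hq1 hij) hy0
    have has : ∀ i, ‖a i‖ < s := fun i => lt_of_lt_of_le (hasmall i) (min_le_right _ _)
    have har : ∀ i, ‖a i‖ < r := fun i =>
      lt_of_lt_of_le (has i) ((min_le_left _ _).trans (min_le_left _ _))
    have haW : ∀ i, a i ∈ W := by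
      intro i
      apply hball
      rw [Metric.mem_ball, dist_zero_right]
      exact lt_of_lt_of_le (hasmall i) (min_le_left _ _)
    set g : ℕ → K := fun i => ∑' j, c j * (a i) ^ j with hg_def
    have hginj : Function.Injective g := by
      intro i j hij
      by_contra hne
      have hkey_i := hkey (a i) (hapos i) (has i)
      have hkey_j := hkey (a j) (hapos j) (has j)
      have hnorm_eq : ‖c j0‖ * ‖a i‖ ^ j0 = ‖c j0‖ * ‖a j‖ ^ j0 := by
        rw [← hkey_i, ← hkey_j, hg_def] at *
        rw [show (∑' k, c k * (a i) ^ k) = ∑' k, c k * (a j) ^ k from hij]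
      have hlt : ∀ i' j' : ℕ, i' < j' → ‖c j0‖ * ‖a j'‖ ^ j0 < ‖c j0‖ * ‖a i'‖ ^ j0 := by
        intro i' j' hij'
        apply mul_lt_mul_of_pos_left _ hcj0pos
        exact pow_lt_pow_left₀ (haanti hij') (norm_nonneg _) (by omega)
      rcases Nat.lt_or_ge i j with h | h
      · exact absurd hnorm_eq (ne_of_gt (hlt i j h))
      · have : i ≠ j := hne
        have h' : j < i := by omega
        exact absurd hnorm_eq (ne_of_lt (hlt j i h'))
    apply Set.infinite_of_injective_forall_mem hginj
    intro i
    exact ⟨a i, haW i, har i, rfl⟩
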